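/- Let 0 < a < c and define the per-subchannel symmetric sum-rate-with-interference-as-noise function F(p) = log(1 + cp/(1+ap)). Then for any k with w ≤ k ≤ c where w = 4a²/(√c-√a)², the unique p ≥ 0 with F'(p) = k is p = (√(c² + (4ac/k)(a+c)) - (2a+c))/(2a(a+c)), and this p lies in [0, (√(ac)-2a)/(2a²)]. -/

import Mathlib

open Set

private lemma sq_le_imp' {x y : ℝ} (hx : 0 ≤ x) (hy : 0 ≤ y) (h : x ^ 2 ≤ y ^ 2) : x ≤ y := by
  nlinarith [h, hx, hy]

set_option maxHeartbeats 1600000 in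
/-- for w ≤ k ≤ c with w = 4a²/(√c-√a)², the unique p ≥ 0 with
F'(p) = c/((1+ap)(1+ap+cp)) = k is the explicit formula, and it lies in the
symmetric noisy-interference power range [0, (√(ac)-2a)/(2a²)]. -/
theorem marginal_rate_inverse (a c k : ℝ) (ha : 0 < a) (hac : a < c)
    (hk1 : 4 * a ^ 2 / (Real.sqrt c - Real.sqrt a) ^ 2 ≤ k) (hk2 : k ≤ c) :
    let p0 := (Real.sqrt (c ^ 2 + (4 * a * c / k) * (a + c)) - (2 * a + c))
      / (2 * a * (a + c));
    p0 ∈ Icc (0 : ℝ) ((Real.sqrt (a * c) - 2 * a) / (2 * a ^ 2)) ∧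
    c / ((1 + a * p0) * (1 + a * p0 + c * p0)) = k ∧
    ∀ p : ℝ, 0 ≤ p → c / ((1 + a * p) * (1 + a * p + c * p)) = k → p = p0 := by
  have hc : 0 < c := ha.trans hac
  obtain ⟨s, hs⟩ : ∃ x, Real.sqrt a = x := ⟨_, rfl⟩
  obtain ⟨t, htt⟩ : ∃ x, Real.sqrt c = x := ⟨_, rfl⟩
  rw [hs, htt] at hk1
  have hs0 : 0 < s := hs ▸ Real.sqrt_pos.mpr ha
  have ht0 : 0 < t := htt ▸ Real.sqrt_pos.mpr hc
  have hst : s < t := by rw [← hs, ← htt]; exact Real.sqrt_lt_sqrt ha.le hac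
  have hs2 : s ^ 2 = a := by rw [← hs]; exact Real.sq_sqrt ha.le
  have ht2 : t ^ 2 = c := by rw [← htt]; exact Real.sq_sqrt hc.le
  have hts : (0:ℝ) < (t - s) ^ 2 := pow_pos (sub_pos.mpr hst) 2
  have hk0 : 0 < k := lt_of_lt_of_le (div_pos (by positivity) hts) hk1
  have h1 : 4 * a ^ 2 ≤ k * (t - s) ^ 2 := by
    rw [div_le_iff₀ hts] at hk1; linarith
  have h2 : 4 * a ^ 2 ≤ c * (t - s) ^ 2 := by
    nlinarith [h1, mul_nonneg (sub_nonneg.mpr hk2) hts.le]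
  have h3 : 2 * s ^ 2 ≤ t * (t - s) := by
    nlinarith [mul_pos ht0 (sub_pos.mpr hst), sq_nonneg s, h2, hs2, ht2]
  have h4 : 2 * s ≤ t := by nlinarith [h3, add_pos hs0 ht0]
  have hst2a : 2 * a ≤ s * t := by nlinarith [h4, hs0, hs2]
  have hD : 0 ≤ c ^ 2 + (4 * a * c / k) * (a + c) := by positivity
  obtain ⟨S, hSd⟩ : ∃ x, Real.sqrt (c ^ 2 + (4 * a * c / k) * (a + c)) = x := ⟨_, rfl⟩
  rw [hSd]
  have hS0 : 0 ≤ S := hSd ▸ Real.sqrt_nonneg _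
  have hS2 : S ^ 2 = c ^ 2 + (4 * a * c / k) * (a + c) := by
    rw [← hSd]; exact Real.sq_sqrt hD
  have hS2' : k * S ^ 2 = k * c ^ 2 + 4 * a * c * (a + c) := by
    rw [hS2]; field_simp
  have hsq' : k * (2 * a + c) ^ 2 ≤ k * S ^ 2 := by
    rw [hS2']
    nlinarith [mul_nonneg (by positivity : (0:ℝ) ≤ 4 * a * (a + c)) (sub_nonneg.mpr hk2)]
  have hsq2 : (2 * a + c) ^ 2 ≤ S ^ 2 := (mul_le_mul_iff_right₀ hk0).mp hsq'
  have hSge : 2 * a + c ≤ S := sq_le_imp' (by positivity) hS0 hsq2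
  obtain ⟨p0, hp0⟩ : ∃ x, (S - (2 * a + c)) / (2 * a * (a + c)) = x := ⟨_, rfl⟩
  rw [hp0]
  have hden : (0:ℝ) < 2 * a * (a + c) := by positivity
  have hp0nn : 0 ≤ p0 := hp0 ▸ div_nonneg (by linarith) hden.le
  have hmul : p0 * (2 * a * (a + c)) = S - (2 * a + c) := by
    rw [← hp0]; exact div_mul_cancel₀ _ hden.ne'
  have hSp : p0 * (2 * a * (a + c)) + (2 * a + c) = S := by linarith [hmul]
  have hS2'' : k * (p0 * (2 * a * (a + c)) + (2 * a + c)) ^ 2 = k * c ^ 2 + 4 * a * c * (a + c) := by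
    rw [hSp]; exact hS2'
  have hkey4 : (4 * a * (a + c)) * (k * ((1 + a * p0) * (1 + a * p0 + c * p0)))
      = (4 * a * (a + c)) * c := by linear_combination hS2''
  have hkey : k * ((1 + a * p0) * (1 + a * p0 + c * p0)) = c :=
    mul_left_cancel₀ (by positivity : (0:ℝ) < 4 * a * (a + c)).ne' hkey4
  have hprod : (1 + a * p0) * (1 + a * p0 + c * p0) = c / k := by
    rw [eq_div_iff hk0.ne']; linarith [hkey, mul_comm k ((1 + a * p0) * (1 + a * p0 + c * p0))]
  have hval : c / ((1 + a * p0) * (1 + a * p0 + c * p0)) = k := by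
    rw [hprod]; field_simp
  have hident : k * ((a + c) * (s * t) - a * c) ^ 2 - a ^ 2 * (k * c ^ 2 + 4 * a * c * (a + c))
      = a * c * (a + c) * (k * (t - s) ^ 2 - 4 * a ^ 2) := by
    rw [← hs2, ← ht2]; ring
  have hA : a ^ 2 * (k * S ^ 2) ≤ k * ((a + c) * (s * t) - a * c) ^ 2 := by
    rw [hS2']
    have hnn : 0 ≤ a * c * (a + c) * (k * (t - s) ^ 2 - 4 * a ^ 2) :=
      mul_nonneg (by positivity) (by linarith)
    linarith [hident, hnn]
  have hN0 : 0 < (a + c) * (s * t) - a * c := by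
    have hstep := mul_le_mul_of_nonneg_left hst2a (add_pos ha hc).le
    linarith [hstep, mul_pos ha ha, mul_pos ha hc]
  have hsqSR : (S * a) ^ 2 ≤ ((a + c) * (s * t) - a * c) ^ 2 :=
    (mul_le_mul_iff_right₀ hk0).mp (by linear_combination hA)
  have hSR : S * a ≤ (a + c) * (s * t) - a * c :=
    sq_le_imp' (mul_nonneg hS0 ha.le) hN0.le hsqSR
  have hp0le : p0 ≤ (Real.sqrt (a * c) - 2 * a) / (2 * a ^ 2) := by
    rw [Real.sqrt_mul ha.le c, hs, htt, ← hp0, div_le_div_iff₀ hden (by positivity)]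
    linarith [mul_le_mul_of_nonneg_left hSR (by positivity : (0:ℝ) ≤ 2 * a)]
  have huniq : ∀ p : ℝ, 0 ≤ p → c / ((1 + a * p) * (1 + a * p + c * p)) = k → p = p0 := by
    intro p hp hpeq
    have hdp : (0:ℝ) < (1 + a * p) * (1 + a * p + c * p) := by
      linarith [mul_nonneg ha.le hp, mul_nonneg hc.le hp, sq_nonneg (a * p),
        mul_nonneg (mul_nonneg ha.le hc.le) (sq_nonneg p)]
    have hkeyp : k * ((1 + a * p) * (1 + a * p + c * p)) = c := by
      rw [← hpeq, div_mul_cancel₀ c hdp.ne']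
    have hXX : (1 + a * p) * (1 + a * p + c * p) = (1 + a * p0) * (1 + a * p0 + c * p0) :=
      mul_left_cancel₀ hk0.ne' (by rw [hkey, hkeyp])
    have hfac : (p - p0) * (a * (a + c) * (p + p0) + (2 * a + c)) = 0 := by
      linear_combination hXX
    have hpos : 0 < a * (a + c) * (p + p0) + (2 * a + c) := by
      linarith [mul_nonneg (mul_pos ha (add_pos ha hc)).le (add_nonneg hp hp0nn)]
    rcases mul_eq_zero.mp hfac with h | h
    · linarith
    · linarith
  exact ⟨Set.mem_Icc.mpr ⟨hp0nn, hp0le⟩, hval, huniq⟩
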